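/- Let r ≥ 3, d ≥ 3 and m ≥ d + 2, and set a = m − d − 1 and b = ⌈d/2⌉. Let T'' be the r-uniform supertree obtained from the loose path P_d^r by attaching a pendant edges at the joint vertex v_b and one pendant edge at the joint vertex v_{b+1}, and let T_{(m,d,r)}(b) be the r-uniform supertree obtained from P_d^r by attaching m − d pendant edges at a fixed core (non-joint) vertex of the edge e_b. Then φ(T'', x) − φ(T_{(m,d,r)}(b), x) = x^{(a+1)(r−1)−2}·( φ(P_{b−1}^r, x)·φ(P_{d−b}^r, x) − x^{r−1}·φ(P_{b−1}^r, x)·φ(P_{d−b−1}^r, x) ) + a·x^{(a+1)(r−1)−2}·( φ(P_{b−1}^r, x)·φ(P_{d−b}^r, x) − φ(P_{b−2}^r, x)·φ(P_{d−b+1}^r, x) ). -/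

import Mathlib

open Classical

noncomputable section

/-- A finite hypergraph: a finite vertex set together with a finite set of edges,
each edge being a finite set of vertices. -/
structure FinHypergraph (α : Type*) where
  verts : Finset α
  edges : Finset (Finset α)

namespace FinHypergraph

variable {α : Type*}

/-- Every edge of `H` is a subset of the vertex set of `H`. -/
def WellFormed (H : FinHypergraph α) : Prop := ∀ e ∈ H.edges, e ⊆ H.verts

/-- `H` is `r`-uniform: every edge has exactly `r` vertices. -/
def Uniform (H : FinHypergraph α) (r : ℕ) : Prop := ∀ e ∈ H.edges, e.card = r

/-- A set of edges is a matching if its members are pairwise disjoint. -/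
def IsMatchingSet (M : Finset (Finset α)) : Prop :=
  ∀ e ∈ M, ∀ f ∈ M, e ≠ f → Disjoint e f

/-- `m(H,k)`: the number of matchings of `H` consisting of exactly `k` edges. -/
noncomputable def matchCount (H : FinHypergraph α) (k : ℕ) : ℕ :=
  (H.edges.powerset.filter (fun M => M.card = k ∧ IsMatchingSet M)).card

/-- The matching polynomial `φ(H,x) = Σ_k (-1)^k m(H,k) x^(n - r·k)` of an
`r`-uniform hypergraph `H` with `n` vertices, evaluated at a real number `x`. -/
noncomputable def matchPoly (H : FinHypergraph α) (r : ℕ) (x : ℝ) : ℝ :=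
  ∑ k ∈ Finset.range (H.verts.card + 1),
    (-1 : ℝ) ^ k * (H.matchCount k : ℝ) * x ^ (H.verts.card - r * k)

/-- `H − S`: delete the vertices of `S` and all edges meeting `S`. -/
def removeVerts (H : FinHypergraph α) (S : Finset α) : FinHypergraph α :=
  ⟨H.verts \ S, H.edges.filter (fun e => Disjoint e S)⟩

/-- The edges of the `r`-uniform loose path of length `p` along the vertex labelling `w`:
the `i`-th edge consists of the `r` vertices `w (i*(r-1)), …, w ((i+1)*(r-1))`, so that
consecutive edges share exactly one vertex. -/
def loosePathEdges (r p : ℕ) (w : ℕ → α) : Finset (Finset α) :=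
  (Finset.range p).image (fun i => (Finset.Icc (i * (r - 1)) ((i + 1) * (r - 1))).image w)

/-- `P` is an `r`-uniform loose path with `m` edges (`P_m^r`); for `m = 0` it is a single
vertex with no edge. -/
def IsLoosePath (r m : ℕ) (P : FinHypergraph α) : Prop :=
  ∃ w : ℕ → α, Set.InjOn w (Set.Iic (m * (r - 1))) ∧
    P.verts = (Finset.Icc 0 (m * (r - 1))).image w ∧
    P.edges = loosePathEdges r m w

/-- The `r`-uniform loose path with `m` edges realized along the vertex labelling `w`. -/
def pathHypergraph (r m : ℕ) (w : ℕ → α) : FinHypergraph α :=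
  ⟨(Finset.Icc 0 (m * (r - 1))).image w, loosePathEdges r m w⟩

/-- `T` is obtained from `H` by attaching `k` pendant edges at the vertex `u`: each new
edge consists of `u` together with `r - 1` new vertices, the new vertices of distinct new
edges being distinct. -/
def IsPendantEdgesAttach (r k : ℕ) (H : FinHypergraph α) (u : α) (T : FinHypergraph α) : Prop :=
  u ∈ H.verts ∧ ∃ F : Fin k → Finset α,
    (∀ i, (F i).card = r - 1) ∧
    (∀ i, Disjoint (F i) H.verts) ∧
    (∀ i j, i ≠ j → Disjoint (F i) (F j)) ∧
    T.verts = H.verts ∪ Finset.univ.biUnion F ∧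
    T.edges = H.edges ∪ Finset.univ.image (fun i => insert u (F i))

end FinHypergraph

namespace FinHypergraph

variable {α : Type*}

noncomputable def matchings (H : FinHypergraph α) : Finset (Finset (Finset α)) :=
  H.edges.powerset.filter IsMatchingSet

lemma mem_matchings {H : FinHypergraph α} {M : Finset (Finset α)} :
    M ∈ H.matchings ↔ M ⊆ H.edges ∧ IsMatchingSet M := by
  simp [matchings, Finset.mem_filter, Finset.mem_powerset]

lemma matching_card_bound {H : FinHypergraph α} {r : ℕ} (hWF : H.WellFormed)
    (hU : H.Uniform r) {M : Finset (Finset α)} (hM : M ∈ H.matchings) :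
    r * M.card ≤ H.verts.card := by
  rw [mem_matchings] at hM
  obtain ⟨hsub, hmat⟩ := hM
  have hcb : (M.biUnion id).card = ∑ e ∈ M, e.card := by
    apply Finset.card_biUnion
    intro e he f hf hef
    exact hmat e he f hf hef
  have hsum : ∑ e ∈ M, e.card = r * M.card := by
    rw [Finset.sum_congr rfl (fun e he => hU e (hsub he))]
    simp [mul_comm]
  have hss : M.biUnion id ⊆ H.verts := by
    intro v hv
    simp only [Finset.mem_biUnion, id] at hv
    obtain ⟨e, he, hve⟩ := hv
    exact hWF e (hsub he) hve
  calc r * M.card = (M.biUnion id).card := by rw [hcb, hsum]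
    _ ≤ H.verts.card := Finset.card_le_card hss

lemma matchCount_eq {H : FinHypergraph α} (k : ℕ) :
    H.matchCount k = (H.matchings.filter (fun M => M.card = k)).card := by
  unfold matchCount matchings
  congr 1
  rw [Finset.filter_filter]
  apply Finset.filter_congr
  intro M _
  tauto

lemma matchPoly_eq_sum {H : FinHypergraph α} {r : ℕ} (hr : 1 ≤ r) (hWF : H.WellFormed)
    (hU : H.Uniform r) (x : ℝ) :
    H.matchPoly r x = ∑ M ∈ H.matchings,
      (-1 : ℝ) ^ M.card * x ^ (H.verts.card - r * M.card) := by
  rw [matchPoly]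
  have hmaps : ∀ M ∈ H.matchings, M.card ∈ Finset.range (H.verts.card + 1) := by
    intro M hM
    have h1 := matching_card_bound hWF hU hM
    have h2 : M.card ≤ H.verts.card := le_trans (Nat.le_mul_of_pos_left _ hr) h1
    simp [Nat.lt_succ_of_le h2]
  calc ∑ k ∈ Finset.range (H.verts.card + 1),
        (-1 : ℝ) ^ k * (H.matchCount k : ℝ) * x ^ (H.verts.card - r * k)
      = ∑ k ∈ Finset.range (H.verts.card + 1),
          ∑ M ∈ H.matchings.filter (fun M => M.card = k),
            (-1 : ℝ) ^ M.card * x ^ (H.verts.card - r * M.card) := by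
        apply Finset.sum_congr rfl
        intro k _
        rw [matchCount_eq]
        rw [Finset.sum_congr rfl (fun M hM => by
          have hMk : M.card = k := by
            have := (Finset.mem_filter.mp hM).2
            simpa using this
          rw [hMk])]
        rw [Finset.sum_const, nsmul_eq_mul]
        ring
    _ = ∑ M ∈ H.matchings, (-1 : ℝ) ^ M.card * x ^ (H.verts.card - r * M.card) :=
        Finset.sum_fiberwise_of_maps_to hmaps _

lemma matchPoly_congr {H H' : FinHypergraph α} {r : ℕ} (h1 : H.verts = H'.verts)
    (h2 : H.edges = H'.edges) (x : ℝ) : H.matchPoly r x = H'.matchPoly r x := by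
  cases H; cases H'
  simp only at h1 h2
  subst h1; subst h2
  rfl

lemma matchPoly_edgeless (V : Finset α) (r : ℕ) (x : ℝ) :
    (FinHypergraph.mk V ∅).matchPoly r x = x ^ V.card := by
  have hc : ∀ k, (FinHypergraph.mk V ∅).matchCount k = if k = 0 then 1 else 0 := by
    intro k
    unfold matchCount
    simp only [Finset.powerset_empty, Finset.filter_singleton]
    by_cases hk : k = 0
    · subst hk
      simp [IsMatchingSet]
    · rw [if_neg]
      · simp [hk]
      · simp [IsMatchingSet]
        omega
  rw [matchPoly]
  rw [Finset.sum_eq_single 0]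
  · simp [hc]
  · intro k _ hk
    simp [hc, hk]
  · intro h
    simp at h
lemma removeVerts_wf {H : FinHypergraph α} (hWF : H.WellFormed) (S : Finset α) :
    (H.removeVerts S).WellFormed := by
  intro e he
  simp only [removeVerts, Finset.mem_filter] at he
  intro v hv
  simp only [removeVerts, Finset.mem_sdiff]
  exact ⟨hWF e he.1 hv, fun hvS => (Finset.disjoint_left.mp he.2 hv) hvS⟩

lemma removeVerts_uniform {H : FinHypergraph α} {r : ℕ} (hU : H.Uniform r) (S : Finset α) :
    (H.removeVerts S).Uniform r := by
  intro e he
  simp only [removeVerts, Finset.mem_filter] at he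
  exact hU e he.1

lemma removeVerts_removeVerts (H : FinHypergraph α) (S S' : Finset α) :
    (H.removeVerts S).removeVerts S' = H.removeVerts (S ∪ S') := by
  unfold removeVerts
  simp only [Finset.filter_filter]
  congr 1
  · ext v; simp only [Finset.mem_sdiff, Finset.mem_union]; tauto
  · apply Finset.filter_congr
    intro e _
    simp [Finset.disjoint_union_right]

/-- Deletion recurrence. -/
lemma matchPoly_edge_rec {H : FinHypergraph α} {r : ℕ} (hr : 1 ≤ r) (hWF : H.WellFormed)
    (hU : H.Uniform r) {e : Finset α} (he : e ∈ H.edges) (x : ℝ) :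
    H.matchPoly r x = (FinHypergraph.mk H.verts (H.edges.erase e)).matchPoly r x
      - (H.removeVerts e).matchPoly r x := by
  have heV : e ⊆ H.verts := hWF e he
  have her : e.card = r := hU e he
  have hrn : r ≤ H.verts.card := by
    rw [← her]; exact Finset.card_le_card heV
  have hWF' : (FinHypergraph.mk H.verts (H.edges.erase e)).WellFormed := by
    intro f hf; exact hWF f (Finset.mem_of_mem_erase hf)
  have hU' : (FinHypergraph.mk H.verts (H.edges.erase e)).Uniform r := by
    intro f hf; exact hU f (Finset.mem_of_mem_erase hf)
  rw [matchPoly_eq_sum hr hWF hU, matchPoly_eq_sum hr hWF' hU',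
    matchPoly_eq_sum hr (removeVerts_wf hWF e) (removeVerts_uniform hU e)]
  rw [← Finset.sum_filter_add_sum_filter_not H.matchings (fun M => e ∈ M)]
  have h1 : H.matchings.filter (fun M => ¬ e ∈ M)
      = (FinHypergraph.mk H.verts (H.edges.erase e)).matchings := by
    apply Finset.ext
    intro M
    simp only [Finset.mem_filter, mem_matchings]
    constructor
    · rintro ⟨⟨hs, hm⟩, hne⟩
      refine ⟨fun f hf => Finset.mem_erase.mpr ⟨?_, hs hf⟩, hm⟩
      rintro rfl; exact hne hf
    · rintro ⟨hs, hm⟩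
      refine ⟨⟨fun f hf => Finset.mem_of_mem_erase (hs hf), hm⟩, fun heM => ?_⟩
      exact Finset.notMem_erase e H.edges (hs heM)
  have hecard : 1 ≤ e.card := by omega
  have hene : e.Nonempty := Finset.card_pos.mp (by omega)
  have hvcard : (H.removeVerts e).verts.card = H.verts.card - r := by
    simp only [removeVerts]
    rw [Finset.card_sdiff_of_subset heV, her]
  have h2 : ∑ M ∈ H.matchings.filter (fun M => e ∈ M),
      (-1 : ℝ) ^ M.card * x ^ (H.verts.card - r * M.card)
      = - ∑ N ∈ (H.removeVerts e).matchings,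
          (-1 : ℝ) ^ N.card * x ^ ((H.removeVerts e).verts.card - r * N.card) := by
    rw [← Finset.sum_neg_distrib]
    apply Finset.sum_nbij' (i := fun M => M.erase e) (j := fun N => insert e N)
    · intro M hM
      simp only [Finset.mem_filter, mem_matchings] at hM
      obtain ⟨⟨hs, hm⟩, heM⟩ := hM
      rw [mem_matchings]
      constructor
      · intro f hf
        obtain ⟨hfe, hfM⟩ := Finset.mem_erase.mp hf
        simp only [removeVerts, Finset.mem_filter]
        exact ⟨hs hfM, hm f hfM e heM hfe⟩
      · intro f hf g hg hfg
        exact hm f (Finset.mem_of_mem_erase hf) g (Finset.mem_of_mem_erase hg) hfg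
    · intro N hN
      rw [mem_matchings] at hN
      obtain ⟨hs, hm⟩ := hN
      have hdis : ∀ f ∈ N, Disjoint f e := by
        intro f hf
        have := hs hf
        simp only [removeVerts, Finset.mem_filter] at this
        exact this.2
      have heN : e ∉ N := by
        intro heN
        have := hdis e heN
        exact hene.ne_empty (by simpa using disjoint_self.mp this)
      simp only [Finset.mem_filter, mem_matchings]
      refine ⟨⟨?_, ?_⟩, Finset.mem_insert_self e N⟩
      · intro f hf
        rcases Finset.mem_insert.mp hf with rfl | hfN
        · exact he
        · have := hs hfN
          simp only [removeVerts, Finset.mem_filter] at this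
          exact this.1
      · intro f hf g hg hfg
        rcases Finset.mem_insert.mp hf with rfl | hfN
        · rcases Finset.mem_insert.mp hg with rfl | hgN
          · exact absurd rfl hfg
          · exact (hdis g hgN).symm
        · rcases Finset.mem_insert.mp hg with rfl | hgN
          · exact hdis f hfN
          · exact hm f hfN g hgN hfg
    · intro M hM
      simp only [Finset.mem_filter] at hM
      exact Finset.insert_erase hM.2
    · intro N hN
      rw [mem_matchings] at hN
      apply Finset.erase_insert
      intro heN
      have := hN.1 heN
      simp only [removeVerts, Finset.mem_filter] at this
      exact hene.ne_empty (by simpa using disjoint_self.mp this.2)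
    · intro M hM
      simp only [Finset.mem_filter] at hM
      obtain ⟨hMm, heM⟩ := hM
      have hcM : 1 ≤ M.card := Finset.card_pos.mpr ⟨e, heM⟩
      have hbound := matching_card_bound hWF hU hMm
      rw [Finset.card_erase_of_mem heM, hvcard]
      have hexp : H.verts.card - r * M.card = H.verts.card - r - r * (M.card - 1) := by
        obtain ⟨n, hn⟩ : ∃ n, M.card = n + 1 := ⟨M.card - 1, by omega⟩
        have h3 : r * M.card = r + r * (M.card - 1) := by
          rw [hn]; simp only [Nat.add_sub_cancel, Nat.mul_succ]; ring
        omega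
      rw [hexp]
      have hsign : (-1 : ℝ) ^ M.card = -(-1 : ℝ) ^ (M.card - 1) := by
        obtain ⟨n, hn⟩ : ∃ n, M.card = n + 1 := ⟨M.card - 1, by omega⟩
        rw [hn]
        simp [pow_succ]
      rw [hsign]
      ring
  rw [h1, h2]
  ring
/-- Disjoint union product formula. -/
lemma matchPoly_union {H1 H2 : FinHypergraph α} {r : ℕ} (hr : 1 ≤ r)
    (hWF1 : H1.WellFormed) (hU1 : H1.Uniform r) (hWF2 : H2.WellFormed) (hU2 : H2.Uniform r)
    (hdisj : Disjoint H1.verts H2.verts) (x : ℝ) :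
    (FinHypergraph.mk (H1.verts ∪ H2.verts) (H1.edges ∪ H2.edges)).matchPoly r x
      = H1.matchPoly r x * H2.matchPoly r x := by
  set H := FinHypergraph.mk (H1.verts ∪ H2.verts) (H1.edges ∪ H2.edges) with hH
  have hWF : H.WellFormed := by
    intro e he
    rcases Finset.mem_union.mp he with h | h
    · exact (hWF1 e h).trans Finset.subset_union_left
    · exact (hWF2 e h).trans Finset.subset_union_right
  have hU : H.Uniform r := by
    intro e he
    rcases Finset.mem_union.mp he with h | h
    · exact hU1 e h
    · exact hU2 e h
  -- edges of H1 and H2 are distinct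
  have hEdisj : ∀ e ∈ H1.edges, e ∉ H2.edges := by
    intro e h1 h2
    have hne : e.Nonempty := Finset.card_pos.mp (by rw [hU1 e h1]; omega)
    obtain ⟨v, hv⟩ := hne
    exact Finset.disjoint_left.mp hdisj (hWF1 e h1 hv) (hWF2 e h2 hv)
  have hcard : H.verts.card = H1.verts.card + H2.verts.card :=
    Finset.card_union_of_disjoint hdisj
  rw [matchPoly_eq_sum hr hWF hU, matchPoly_eq_sum hr hWF1 hU1, matchPoly_eq_sum hr hWF2 hU2]
  rw [Finset.sum_mul_sum]
  rw [← Finset.sum_product']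
  apply Finset.sum_nbij' (i := fun M => (M ∩ H1.edges, M ∩ H2.edges))
    (j := fun p => p.1 ∪ p.2)
  · intro M hM
    rw [mem_matchings] at hM
    obtain ⟨hs, hm⟩ := hM
    simp only [Finset.mem_product]
    constructor <;> rw [mem_matchings]
    · exact ⟨Finset.inter_subset_right, fun e he f hf =>
        hm e (Finset.mem_of_mem_inter_left he) f (Finset.mem_of_mem_inter_left hf)⟩
    · exact ⟨Finset.inter_subset_right, fun e he f hf =>
        hm e (Finset.mem_of_mem_inter_left he) f (Finset.mem_of_mem_inter_left hf)⟩
  · intro p hp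
    simp only [Finset.mem_product] at hp
    obtain ⟨h1, h2⟩ := hp
    rw [mem_matchings] at h1 h2 ⊢
    constructor
    · intro e he
      rcases Finset.mem_union.mp he with h | h
      · exact Finset.mem_union_left _ (h1.1 h)
      · exact Finset.mem_union_right _ (h2.1 h)
    · intro e he f hf hef
      rcases Finset.mem_union.mp he with h | h <;> rcases Finset.mem_union.mp hf with h' | h'
      · exact h1.2 e h f h' hef
      · exact hdisj.mono (hWF1 e (h1.1 h)) (hWF2 f (h2.1 h'))
      · exact (hdisj.mono (hWF1 f (h1.1 h')) (hWF2 e (h2.1 h))).symm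
      · exact h2.2 e h f h' hef
  · intro M hM
    rw [mem_matchings] at hM
    simp only
    rw [← Finset.inter_union_distrib_left]
    exact Finset.inter_eq_left.mpr hM.1
  · intro p hp
    simp only [Finset.mem_product] at hp
    obtain ⟨h1, h2⟩ := hp
    rw [mem_matchings] at h1 h2
    have e1 : (p.1 ∪ p.2) ∩ H1.edges = p.1 := by
      rw [Finset.union_inter_distrib_right]
      rw [Finset.inter_eq_left.mpr h1.1]
      have : p.2 ∩ H1.edges = ∅ := by
        rw [Finset.eq_empty_iff_forall_notMem]
        intro e he
        obtain ⟨he2, he1⟩ := Finset.mem_inter.mp he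
        exact hEdisj e he1 (h2.1 he2)
      rw [this, Finset.union_empty]
    have e2 : (p.1 ∪ p.2) ∩ H2.edges = p.2 := by
      rw [Finset.union_inter_distrib_right]
      rw [Finset.inter_eq_left.mpr h2.1]
      have : p.1 ∩ H2.edges = ∅ := by
        rw [Finset.eq_empty_iff_forall_notMem]
        intro e he
        obtain ⟨he1, he2⟩ := Finset.mem_inter.mp he
        exact hEdisj e (h1.1 he1) he2
      rw [this, Finset.empty_union]
    rw [e1, e2]
  · intro M hM
    rw [mem_matchings] at hM
    obtain ⟨hs, hm⟩ := hM
    have hM1 := Finset.inter_subset_right (s₁ := M) (s₂ := H1.edges)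
    have hM2 := Finset.inter_subset_right (s₁ := M) (s₂ := H2.edges)
    have hsplit : M = (M ∩ H1.edges) ∪ (M ∩ H2.edges) := by
      rw [← Finset.inter_union_distrib_left]
      exact (Finset.inter_eq_left.mpr hs).symm
    have hdisjM : Disjoint (M ∩ H1.edges) (M ∩ H2.edges) := by
      rw [Finset.disjoint_left]
      intro e he1 he2
      exact hEdisj e (Finset.mem_of_mem_inter_right he1) (Finset.mem_of_mem_inter_right he2)
    have hcardM : M.card = (M ∩ H1.edges).card + (M ∩ H2.edges).card := by
      conv_lhs => rw [hsplit]
      exact Finset.card_union_of_disjoint hdisjM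
    have hb1 : r * (M ∩ H1.edges).card ≤ H1.verts.card := by
      apply matching_card_bound hWF1 hU1
      rw [mem_matchings]
      exact ⟨Finset.inter_subset_right, fun e he f hf =>
        hm e (Finset.mem_of_mem_inter_left he) f (Finset.mem_of_mem_inter_left hf)⟩
    have hb2 : r * (M ∩ H2.edges).card ≤ H2.verts.card := by
      apply matching_card_bound hWF2 hU2
      rw [mem_matchings]
      exact ⟨Finset.inter_subset_right, fun e he f hf =>
        hm e (Finset.mem_of_mem_inter_left he) f (Finset.mem_of_mem_inter_left hf)⟩
    simp only
    rw [hcard, hcardM]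
    have hexp : H1.verts.card + H2.verts.card - r * ((M ∩ H1.edges).card + (M ∩ H2.edges).card)
        = (H1.verts.card - r * (M ∩ H1.edges).card) + (H2.verts.card - r * (M ∩ H2.edges).card) := by
      have : r * ((M ∩ H1.edges).card + (M ∩ H2.edges).card)
          = r * (M ∩ H1.edges).card + r * (M ∩ H2.edges).card := by ring
      omega
    rw [hexp, pow_add, pow_add]
    ring
section InjOnHelpers

variable {w : ℕ → α} {N : ℕ}

lemma injOn_mem_image (hw : Set.InjOn w (Set.Iic N)) {B : Finset ℕ}
    (hB : ∀ b ∈ B, b ≤ N) {a : ℕ} (ha : a ≤ N) : w a ∈ B.image w ↔ a ∈ B := by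
  constructor
  · intro h
    obtain ⟨b, hb, hba⟩ := Finset.mem_image.mp h
    rwa [← hw (hB b hb) ha hba]
  · intro h
    exact Finset.mem_image_of_mem w h

lemma injOn_disjoint_image_iff (hw : Set.InjOn w (Set.Iic N)) {A B : Finset ℕ}
    (hA : ∀ a ∈ A, a ≤ N) (hB : ∀ b ∈ B, b ≤ N) :
    Disjoint (A.image w) (B.image w) ↔ Disjoint A B := by
  constructor
  · intro h
    rw [Finset.disjoint_left]
    intro a haA haB
    exact Finset.disjoint_left.mp h (Finset.mem_image_of_mem w haA)
      (Finset.mem_image_of_mem w haB)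
  · intro h
    rw [Finset.disjoint_left]
    intro v hvA hvB
    obtain ⟨a, ha, rfl⟩ := Finset.mem_image.mp hvA
    rw [injOn_mem_image hw hB (hA a ha)] at hvB
    exact Finset.disjoint_left.mp h ha hvB

lemma injOn_image_inj (hw : Set.InjOn w (Set.Iic N)) {A B : Finset ℕ}
    (hA : ∀ a ∈ A, a ≤ N) (hB : ∀ b ∈ B, b ≤ N)
    (h : A.image w = B.image w) : A = B := by
  apply Finset.ext
  intro a
  constructor
  · intro ha
    rw [← injOn_mem_image hw hB (hA a ha), ← h]
    exact Finset.mem_image_of_mem w ha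
  · intro ha
    rw [← injOn_mem_image hw hA (hB a ha), h]
    exact Finset.mem_image_of_mem w ha

lemma injOn_card_image (hw : Set.InjOn w (Set.Iic N)) {A : Finset ℕ}
    (hA : ∀ a ∈ A, a ≤ N) : (A.image w).card = A.card := by
  apply Finset.card_image_of_injOn
  intro a ha b hb
  exact hw (hA a (by simpa using ha)) (hA b (by simpa using hb))

lemma injOn_image_sdiff (hw : Set.InjOn w (Set.Iic N)) {A B : Finset ℕ}
    (hA : ∀ a ∈ A, a ≤ N) (hB : ∀ b ∈ B, b ≤ N) :
    (A \ B).image w = A.image w \ B.image w := by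
  apply Finset.ext
  intro v
  simp only [Finset.mem_image, Finset.mem_sdiff]
  constructor
  · rintro ⟨a, ⟨haA, haB⟩, rfl⟩
    refine ⟨⟨a, haA, rfl⟩, fun h => ?_⟩
    have : w a ∈ B.image w := by simpa [Finset.mem_image] using h
    rw [injOn_mem_image hw hB (hA a haA)] at this
    exact haB this
  · rintro ⟨⟨a, haA, rfl⟩, h⟩
    refine ⟨a, ⟨haA, fun hB' => ?_⟩, rfl⟩
    exact h ⟨a, hB', rfl⟩

end InjOnHelpers

section PathFacts

variable {r m : ℕ} {w : ℕ → α}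

lemma edge_index_le {r : ℕ} (hi : i < m) {a : ℕ}
    (ha : a ∈ Finset.Icc (i * (r-1)) ((i+1) * (r-1))) : a ≤ m * (r-1) := by
  rw [Finset.mem_Icc] at ha
  calc a ≤ (i+1) * (r-1) := ha.2
    _ ≤ m * (r-1) := Nat.mul_le_mul_right _ hi

lemma pathHypergraph_wf (r m : ℕ) (w : ℕ → α) : (pathHypergraph r m w).WellFormed := by
  intro e he
  simp only [pathHypergraph, loosePathEdges, Finset.mem_image] at he
  obtain ⟨i, hi, rfl⟩ := he
  apply Finset.image_subset_image
  intro a ha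
  simp only [Finset.mem_Icc]
  exact ⟨Nat.zero_le a, edge_index_le (Finset.mem_range.mp hi) ha⟩

lemma pathHypergraph_uniform (hr : 2 ≤ r) (hw : Set.InjOn w (Set.Iic (m * (r-1)))) :
    (pathHypergraph r m w).Uniform r := by
  intro e he
  simp only [pathHypergraph, loosePathEdges, Finset.mem_image] at he
  obtain ⟨i, hi, rfl⟩ := he
  rw [injOn_card_image hw (fun a ha => edge_index_le (Finset.mem_range.mp hi) ha)]
  rw [Nat.card_Icc]
  have : (i+1) * (r-1) = i * (r-1) + (r-1) := by ring
  omega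

lemma pathHypergraph_card (hw : Set.InjOn w (Set.Iic (m * (r-1)))) :
    (pathHypergraph r m w).verts.card = m * (r-1) + 1 := by
  simp only [pathHypergraph]
  rw [injOn_card_image hw (fun a ha => by simpa using (Finset.mem_Icc.mp ha).2)]
  simp [Nat.card_Icc]

lemma loosePath_edge_inj (hq : 1 ≤ r - 1) (hw : Set.InjOn w (Set.Iic (m * (r-1))))
    {i j : ℕ} (hi : i < m) (hj : j < m)
    (h : (Finset.Icc (i * (r-1)) ((i+1) * (r-1))).image w
       = (Finset.Icc (j * (r-1)) ((j+1) * (r-1))).image w) : i = j := by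
  have hIcc := injOn_image_inj hw (fun a ha => edge_index_le hi ha)
    (fun a ha => edge_index_le hj ha) h
  have h1 : i * (r-1) ∈ Finset.Icc (j * (r-1)) ((j+1) * (r-1)) := by
    rw [← hIcc]; simp [Finset.mem_Icc]; exact Nat.mul_le_mul_right _ (by omega)
  have h2 : j * (r-1) ∈ Finset.Icc (i * (r-1)) ((i+1) * (r-1)) := by
    rw [hIcc]; simp [Finset.mem_Icc]; exact Nat.mul_le_mul_right _ (by omega)
  rw [Finset.mem_Icc] at h1 h2
  have : i * (r-1) = j * (r-1) := le_antisymm h2.1 h1.1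
  exact Nat.eq_of_mul_eq_mul_right (by omega) this

end PathFacts
/-- The matching polynomial of the loose path `P_m^r`, defined by recurrence. -/
noncomputable def pathPoly (r : ℕ) : ℕ → ℝ → ℝ
  | 0, x => x
  | 1, x => x ^ r - 1
  | (m+2), x => x ^ (r-1) * pathPoly r (m+1) x - x ^ (r-2) * pathPoly r m x

lemma matchPoly_pathHypergraph (hr : 3 ≤ r) :
    ∀ (m : ℕ) (w : ℕ → α), Set.InjOn w (Set.Iic (m * (r-1))) → ∀ x : ℝ,
      (pathHypergraph r m w).matchPoly r x = pathPoly r m x := by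
  have hr1 : 1 ≤ r := by omega
  have hq : 2 ≤ r - 1 := by omega
  intro m
  induction m using Nat.strong_induction_on with
  | _ m IH =>
    match m with
    | 0 =>
      intro w hw x
      have hv : (pathHypergraph r 0 w).verts = {w 0} := by
        simp [pathHypergraph]
      have he : (pathHypergraph r 0 w).edges = (∅ : Finset (Finset α)) := by
        simp [pathHypergraph, loosePathEdges]
      rw [matchPoly_congr (H' := FinHypergraph.mk {w 0} ∅) hv he, matchPoly_edgeless]
      simp [pathPoly]
    | 1 =>
      intro w hw x
      set e : Finset α := (Finset.Icc (0 * (r-1)) (1 * (r-1))).image w with hedef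
      have hedges : (pathHypergraph r 1 w).edges = {e} := by
        simp only [pathHypergraph, loosePathEdges, Finset.range_one, Finset.image_singleton]
        rfl
      have hverts : (pathHypergraph r 1 w).verts = e := by
        simp only [pathHypergraph, hedef, Nat.zero_mul]
      have hwf := pathHypergraph_wf r 1 w
      have hu := pathHypergraph_uniform (r := r) (m := 1) (w := w) (by omega) hw
      have hee : e ∈ (pathHypergraph r 1 w).edges := by
        rw [hedges]; exact Finset.mem_singleton_self e
      rw [matchPoly_edge_rec hr1 hwf hu hee]
      have h1 : (FinHypergraph.mk (pathHypergraph r 1 w).verts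
          ((pathHypergraph r 1 w).edges.erase e)).matchPoly r x = x ^ r := by
        rw [matchPoly_congr (H := FinHypergraph.mk (pathHypergraph r 1 w).verts
            ((pathHypergraph r 1 w).edges.erase e))
          (H' := FinHypergraph.mk (pathHypergraph r 1 w).verts ∅) rfl
          (by rw [hedges]; simp)]
        rw [matchPoly_edgeless]
        congr 1
        have := pathHypergraph_card (m := 1) (r := r) (w := w) hw
        rw [this]
        omega
      have h2 : ((pathHypergraph r 1 w).removeVerts e).matchPoly r x = 1 := by
        have hv2 : ((pathHypergraph r 1 w).removeVerts e).verts = (∅ : Finset α) := by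
          simp only [removeVerts, hverts]
          exact Finset.sdiff_self e
        have he2 : ((pathHypergraph r 1 w).removeVerts e).edges = (∅ : Finset (Finset α)) := by
          simp only [removeVerts, hedges]
          rw [Finset.filter_singleton, if_neg]
          intro hdis
          have hne : e.Nonempty := by
            refine ⟨w 0, ?_⟩
            rw [hedef]
            exact Finset.mem_image_of_mem w (by simp)
          exact hne.ne_empty (by simpa using disjoint_self.mp hdis)
        rw [matchPoly_congr (H' := FinHypergraph.mk ∅ ∅) hv2 he2, matchPoly_edgeless]
        simp
      rw [h1, h2]
      simp [pathPoly]
    | (p+2) =>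
      intro w hw x
      have e1 : (p+1) * (r-1) = p * (r-1) + (r-1) := by ring
      have e2 : (p+2) * (r-1) = p * (r-1) + (r-1) + (r-1) := by ring
      set f : Finset α := (Finset.Icc ((p+1) * (r-1)) ((p+2) * (r-1))).image w with hfdef
      have hwf := pathHypergraph_wf r (p+2) w
      have hu := pathHypergraph_uniform (r := r) (m := p+2) (w := w) (by omega) hw
      have hfe : f ∈ (pathHypergraph r (p+2) w).edges := by
        simp only [pathHypergraph, loosePathEdges, Finset.mem_image]
        exact ⟨p+1, by simp, rfl⟩
      have hwIH1 : Set.InjOn w (Set.Iic ((p+1) * (r-1))) := by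
        apply hw.mono
        intro a ha
        simp only [Set.mem_Iic] at ha ⊢
        omega
      have hwIH0 : Set.InjOn w (Set.Iic (p * (r-1))) := by
        apply hw.mono
        intro a ha
        simp only [Set.mem_Iic] at ha ⊢
        omega
      rw [matchPoly_edge_rec hr1 hwf hu hfe]
      -- deleting edge f
      have hdel : (FinHypergraph.mk (pathHypergraph r (p+2) w).verts
            ((pathHypergraph r (p+2) w).edges.erase f)).matchPoly r x
          = pathPoly r (p+1) x * x ^ (r-1) := by
        set S : Finset α := (Finset.Ioc ((p+1)*(r-1)) ((p+2)*(r-1))).image w with hSdef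
        have herase : (pathHypergraph r (p+2) w).edges.erase f
            = (pathHypergraph r (p+1) w).edges := by
          have hsplit : (pathHypergraph r (p+2) w).edges
              = insert f (loosePathEdges r (p+1) w) := by
            simp only [pathHypergraph, loosePathEdges, Finset.range_add_one (n := p+1)]
            rw [Finset.image_insert]
          have hnotmem : f ∉ loosePathEdges r (p+1) w := by
            intro hmem
            simp only [loosePathEdges, Finset.mem_image] at hmem
            obtain ⟨i, hi, hif⟩ := hmem
            have hilt : i < p + 1 := Finset.mem_range.mp hi
            have : i = p + 1 := loosePath_edge_inj (by omega) hw (by omega)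
              (by omega) (hif.trans hfdef)
            omega
          rw [hsplit, Finset.erase_insert hnotmem]
          rfl
        have hvsplit : (pathHypergraph r (p+2) w).verts
            = (pathHypergraph r (p+1) w).verts ∪ S := by
          simp only [pathHypergraph, hSdef]
          rw [← Finset.image_union]
          congr 1
          rw [e2, e1]
          ext a
          simp only [Finset.mem_Icc, Finset.mem_union, Finset.mem_Ioc]
          omega
        have hdisj : Disjoint (pathHypergraph r (p+1) w).verts S := by
          simp only [pathHypergraph, hSdef]
          rw [injOn_disjoint_image_iff hw (fun a ha => by
              simp only [Finset.mem_Icc] at ha; omega)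
            (fun a ha => by simp only [Finset.mem_Ioc] at ha; omega)]
          rw [Finset.disjoint_left]
          intro a ha ha'
          simp only [Finset.mem_Icc] at ha
          simp only [Finset.mem_Ioc] at ha'
          omega
        have hEq : FinHypergraph.mk (pathHypergraph r (p+2) w).verts
              ((pathHypergraph r (p+2) w).edges.erase f)
            = FinHypergraph.mk ((pathHypergraph r (p+1) w).verts ∪ S)
              ((pathHypergraph r (p+1) w).edges ∪ (∅ : Finset (Finset α))) := by
          simp only [FinHypergraph.mk.injEq, Finset.union_empty]
          exact ⟨hvsplit, herase⟩
        rw [hEq]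
        have := matchPoly_union (H1 := pathHypergraph r (p+1) w)
          (H2 := FinHypergraph.mk S ∅) hr1 (pathHypergraph_wf r (p+1) w)
          (pathHypergraph_uniform (by omega) hwIH1)
          (by intro e' he'; simp at he') (by intro e' he'; simp at he') hdisj x
        rw [this, IH (p+1) (by omega) w hwIH1 x, matchPoly_edgeless]
        congr 2
        rw [hSdef, injOn_card_image hw (fun a ha => by
          simp only [Finset.mem_Ioc] at ha; omega)]
        rw [Nat.card_Ioc]
        omega
      -- removing the vertices of f
      have hrem : ((pathHypergraph r (p+2) w).removeVerts f).matchPoly r x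
          = pathPoly r p x * x ^ (r-2) := by
        set S : Finset α := (Finset.Ioo (p*(r-1)) ((p+1)*(r-1))).image w with hSdef
        have hvrem : ((pathHypergraph r (p+2) w).removeVerts f).verts
            = (pathHypergraph r p w).verts ∪ S := by
          simp only [removeVerts, pathHypergraph, hfdef, hSdef]
          rw [← injOn_image_sdiff hw
            (fun a ha => by simp only [Finset.mem_Icc] at ha; omega)
            (fun a ha => by simp only [Finset.mem_Icc] at ha; omega)]
          rw [← Finset.image_union]
          congr 1
          rw [e2, e1]
          ext a
          simp only [Finset.mem_sdiff, Finset.mem_Icc, Finset.mem_union, Finset.mem_Ioo]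
          omega
        have herem : ((pathHypergraph r (p+2) w).removeVerts f).edges
            = (pathHypergraph r p w).edges := by
          simp only [removeVerts, pathHypergraph, loosePathEdges]
          rw [Finset.filter_image]
          congr 1
          apply Finset.ext
          intro i
          simp only [Finset.mem_filter, Finset.mem_range]
          constructor
          · rintro ⟨hilt, hdis⟩
            by_contra hip
            have hip' : i = p ∨ i = p + 1 := by omega
            have hle1 : p * (r-1) ≤ (p+1) * (r-1) := Nat.mul_le_mul_right _ (by omega)
            have hle2 : (p+1) * (r-1) ≤ (p+1+1) * (r-1) := Nat.mul_le_mul_right _ (by omega)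
            have hcommon : w ((p+1)*(r-1)) ∈ (Finset.Icc (i*(r-1)) ((i+1)*(r-1))).image w := by
              apply Finset.mem_image_of_mem
              simp only [Finset.mem_Icc]
              rcases hip' with rfl | rfl
              · exact ⟨hle1, by omega⟩
              · exact ⟨le_refl _, hle2⟩
            have hcommon2 : w ((p+1)*(r-1)) ∈ f := by
              rw [hfdef]
              apply Finset.mem_image_of_mem
              simp only [Finset.mem_Icc]
              exact ⟨le_refl _, by omega⟩
            exact Finset.disjoint_left.mp hdis hcommon hcommon2
          · intro hip
            refine ⟨by omega, ?_⟩
            rw [hfdef]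
            rw [injOn_disjoint_image_iff hw
              (fun a ha => edge_index_le (m := p+2) (by omega) ha)
              (fun a ha => by simp only [Finset.mem_Icc] at ha; omega)]
            rw [Finset.disjoint_left]
            intro a ha ha'
            simp only [Finset.mem_Icc] at ha ha'
            have : (i+1) * (r-1) ≤ p * (r-1) := Nat.mul_le_mul_right _ (by omega)
            omega
        have hdisj : Disjoint (pathHypergraph r p w).verts S := by
          simp only [pathHypergraph, hSdef]
          rw [injOn_disjoint_image_iff hw (fun a ha => by
              simp only [Finset.mem_Icc] at ha; omega)
            (fun a ha => by simp only [Finset.mem_Ioo] at ha; omega)]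
          rw [Finset.disjoint_left]
          intro a ha ha'
          simp only [Finset.mem_Icc] at ha
          simp only [Finset.mem_Ioo] at ha'
          omega
        have hEq : (pathHypergraph r (p+2) w).removeVerts f
            = FinHypergraph.mk ((pathHypergraph r p w).verts ∪ S)
              ((pathHypergraph r p w).edges ∪ (∅ : Finset (Finset α))) := by
          cases' hrv : (pathHypergraph r (p+2) w).removeVerts f with V E
          simp only [FinHypergraph.mk.injEq, Finset.union_empty]
          constructor
          · rw [← hvrem, hrv]
          · rw [← herem, hrv]
        rw [hEq]
        have := matchPoly_union (H1 := pathHypergraph r p w)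
          (H2 := FinHypergraph.mk S ∅) hr1 (pathHypergraph_wf r p w)
          (pathHypergraph_uniform (by omega) hwIH0)
          (by intro e' he'; simp at he') (by intro e' he'; simp at he') hdisj x
        rw [this, IH p (by omega) w hwIH0 x, matchPoly_edgeless]
        congr 2
        rw [hSdef, injOn_card_image hw (fun a ha => by
          simp only [Finset.mem_Ioo] at ha; omega)]
        rw [Nat.card_Ioo]
        omega
      rw [hdel, hrem]
      show _ = pathPoly r (p+2) x
      simp only [pathPoly]
      ring

lemma matchPoly_isLoosePath {P : FinHypergraph α} (hr : 3 ≤ r) {m : ℕ}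
    (hP : IsLoosePath r m P) (x : ℝ) : P.matchPoly r x = pathPoly r m x := by
  obtain ⟨w, hw, hv, he⟩ := hP
  rw [matchPoly_congr (H' := pathHypergraph r m w) hv he]
  exact matchPoly_pathHypergraph hr m w hw x
lemma shift_range (n s : ℕ) : (Finset.range n).image (· + s) = Finset.Ico s (n + s) := by
  ext j
  simp only [Finset.mem_image, Finset.mem_range, Finset.mem_Ico]
  constructor
  · rintro ⟨i, hi, rfl⟩; omega
  · intro hj; exact ⟨j - s, by omega, by omega⟩

/-- Generic decomposition of a loose path with some vertices removed. -/
lemma matchPoly_path_removeVerts (hr : 3 ≤ r) {d : ℕ} {w : ℕ → α}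
    (hw : Set.InjOn w (Set.Iic (d * (r-1))))
    (J Mid : Finset ℕ) (lft rt : ℕ) (hlr : lft < rt) (hrd : rt ≤ d)
    (hJ : ∀ a ∈ J, a ≤ d * (r-1))
    (hfilter : (Finset.range d).filter
        (fun i => Disjoint (Finset.Icc (i*(r-1)) ((i+1)*(r-1))) J)
      = Finset.range lft ∪ Finset.Ico rt d)
    (hverts : Finset.Icc 0 (d*(r-1)) \ J
      = Finset.Icc 0 (lft*(r-1)) ∪ Mid ∪ Finset.Icc (rt*(r-1)) (d*(r-1)))
    (hMid : ∀ a ∈ Mid, lft*(r-1) < a ∧ a < rt*(r-1)) (x : ℝ) :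
    ((pathHypergraph r d w).removeVerts (J.image w)).matchPoly r x
      = pathPoly r lft x * pathPoly r (d - rt) x * x ^ Mid.card := by
  have hr1 : 1 ≤ r := by omega
  have hq : 2 ≤ r - 1 := by omega
  have hld : lft ≤ d := by omega
  set q := r - 1 with hqdef
  have hshift : (d - rt) * q + rt * q = d * q := by
    rw [← Nat.add_mul]
    congr 1
    omega
  set w' : ℕ → α := fun n => w (n + rt * q) with hw'def
  have hw' : Set.InjOn w' (Set.Iic ((d - rt) * q)) := by
    intro a ha b hb hab
    simp only [Set.mem_Iic] at ha hb
    have := hw (show a + rt * q ∈ Set.Iic (d * q) by simp only [Set.mem_Iic]; omega)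
      (show b + rt * q ∈ Set.Iic (d * q) by simp only [Set.mem_Iic]; omega) hab
    omega
  have hwlft : Set.InjOn w (Set.Iic (lft * q)) := by
    apply hw.mono
    intro a ha
    simp only [Set.mem_Iic] at ha ⊢
    calc a ≤ lft * q := ha
      _ ≤ d * q := Nat.mul_le_mul_right _ hld
  have hlftled : lft * q ≤ d * q := Nat.mul_le_mul_right _ hld
  have hlfrtq : lft * q < rt * q := Nat.mul_lt_mul_of_pos_right hlr (by omega)
  have hrtled : rt * q ≤ d * q := Nat.mul_le_mul_right _ hrd
  have hMidle : ∀ a ∈ Mid, a ≤ d * q := by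
    intro a ha
    have := hMid a ha
    omega
  -- right path verts as a subset of w's indices
  have hRverts : (pathHypergraph r (d - rt) w').verts
      = (Finset.Icc (rt*q) (d*q)).image w := by
    simp only [pathHypergraph, ← hqdef, hw'def]
    have himg : ∀ A : Finset ℕ, A.image (fun n => w (n + rt * q))
        = (A.image (· + rt * q)).image w := by
      intro A
      rw [Finset.image_image]
      rfl
    rw [himg, Finset.image_add_right_Icc]
    congr 2
    omega
  -- right path edges
  have hRedges : (pathHypergraph r (d - rt) w').edges
      = (Finset.Ico rt d).image (fun i => (Finset.Icc (i*q) ((i+1)*q)).image w) := by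
    simp only [pathHypergraph, loosePathEdges, ← hqdef, hw'def]
    rw [show Finset.Ico rt d = (Finset.range (d - rt)).image (· + rt) from by
      rw [shift_range]; congr 1; omega]
    rw [Finset.image_image]
    apply Finset.image_congr
    intro i _
    simp only [Function.comp]
    have h1 : (i + rt) * q = i * q + rt * q := by ring
    have h2 : (i + rt + 1) * q = (i + 1) * q + rt * q := by ring
    rw [h1, h2, ← Finset.image_add_right_Icc]
    rw [Finset.image_image]
    rfl
  -- decompose the removed graph
  set L := pathHypergraph r lft w with hLdef
  set R := pathHypergraph r (d - rt) w' with hRdef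
  set Mw : Finset α := Mid.image w with hMwdef
  have hVdecomp : ((pathHypergraph r d w).removeVerts (J.image w)).verts
      = (L.verts ∪ Mw) ∪ R.verts := by
    simp only [removeVerts, pathHypergraph, ← hqdef, hLdef, hMwdef]
    rw [hRverts]
    rw [← injOn_image_sdiff hw (fun a ha => by simp only [Finset.mem_Icc] at ha; omega) hJ]
    rw [hverts, Finset.image_union, Finset.image_union]
  have hEdecomp : ((pathHypergraph r d w).removeVerts (J.image w)).edges
      = (L.edges ∪ (∅ : Finset (Finset α))) ∪ R.edges := by
    simp only [removeVerts, pathHypergraph, loosePathEdges, ← hqdef, hLdef,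
      Finset.union_empty]
    rw [hRedges, Finset.filter_image]
    rw [← Finset.image_union]
    congr 1
    rw [← hfilter]
    apply Finset.filter_congr
    intro i hi
    simp only [Finset.mem_range] at hi
    rw [injOn_disjoint_image_iff hw (fun a ha => edge_index_le hi ha) hJ]
  -- disjointness
  have hdisj1 : Disjoint L.verts Mw := by
    simp only [hLdef, pathHypergraph, ← hqdef, hMwdef]
    rw [injOn_disjoint_image_iff hw
      (fun a ha => by simp only [Finset.mem_Icc] at ha; omega) hMidle]
    rw [Finset.disjoint_left]
    intro a ha ha'
    simp only [Finset.mem_Icc] at ha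
    have := hMid a ha'
    omega
  have hdisj2 : Disjoint (L.verts ∪ Mw) R.verts := by
    rw [hRverts]
    simp only [hLdef, pathHypergraph, ← hqdef, hMwdef]
    rw [← Finset.image_union]
    rw [injOn_disjoint_image_iff hw
      (fun a ha => by
        simp only [Finset.mem_union, Finset.mem_Icc] at ha
        rcases ha with h | h
        · omega
        · exact hMidle a h)
      (fun a ha => by simp only [Finset.mem_Icc] at ha; omega)]
    rw [Finset.disjoint_left]
    intro a ha ha'
    simp only [Finset.mem_union, Finset.mem_Icc] at ha ha'
    rcases ha with h | h
    · omega
    · have := hMid a h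
      omega
  -- structures
  have hLwf := pathHypergraph_wf r lft w
  have hLu : L.Uniform r := pathHypergraph_uniform (by omega) hwlft
  have hRwf := pathHypergraph_wf r (d - rt) w'
  have hRu : R.Uniform r := pathHypergraph_uniform (by omega) hw'
  have hH1wf : (FinHypergraph.mk (L.verts ∪ Mw) (L.edges ∪ (∅ : Finset (Finset α)))).WellFormed := by
    intro e he
    simp only [Finset.union_empty] at he
    exact (hLwf e he).trans Finset.subset_union_left
  have hH1u : (FinHypergraph.mk (L.verts ∪ Mw) (L.edges ∪ (∅ : Finset (Finset α)))).Uniform r := by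
    intro e he
    simp only [Finset.union_empty] at he
    exact hLu e he
  have hEq : (pathHypergraph r d w).removeVerts (J.image w)
      = FinHypergraph.mk ((FinHypergraph.mk (L.verts ∪ Mw) (L.edges ∪ (∅ : Finset (Finset α)))).verts ∪ R.verts)
          ((FinHypergraph.mk (L.verts ∪ Mw) (L.edges ∪ (∅ : Finset (Finset α)))).edges ∪ R.edges) := by
    cases' hrv : (pathHypergraph r d w).removeVerts (J.image w) with V E
    simp only [FinHypergraph.mk.injEq]
    constructor
    · rw [← hVdecomp, hrv]
    · rw [← hEdecomp, hrv]
  rw [hEq]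
  rw [matchPoly_union hr1 hH1wf hH1u hRwf hRu hdisj2 x]
  have hinner : (FinHypergraph.mk (L.verts ∪ Mw) (L.edges ∪ (∅ : Finset (Finset α)))).matchPoly r x
      = L.matchPoly r x * x ^ Mid.card := by
    rw [matchPoly_union (H2 := FinHypergraph.mk Mw ∅) hr1 hLwf hLu
      (by intro e' he'; simp at he') (by intro e' he'; simp at he') hdisj1 x]
    rw [matchPoly_edgeless]
    congr 2
    rw [hMwdef]
    exact injOn_card_image hw hMidle
  rw [hinner]
  rw [matchPoly_pathHypergraph hr lft w hwlft x,
    matchPoly_pathHypergraph hr (d - rt) w' hw' x]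
  ring
lemma attach_wf {r k : ℕ} {H T : FinHypergraph α} {u : α} (hWF : H.WellFormed)
    (hT : IsPendantEdgesAttach r k H u T) : T.WellFormed := by
  obtain ⟨hu, F, hcard, hdisjH, hpair, hv, he⟩ := hT
  intro e hee
  rw [he] at hee
  rw [hv]
  rcases Finset.mem_union.mp hee with h | h
  · exact (hWF e h).trans Finset.subset_union_left
  · simp only [Finset.mem_image, Finset.mem_univ, true_and] at h
    obtain ⟨i, rfl⟩ := h
    intro y hy
    rcases Finset.mem_insert.mp hy with rfl | hyF
    · exact Finset.mem_union_left _ hu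
    · exact Finset.mem_union_right _ (Finset.mem_biUnion.mpr ⟨i, Finset.mem_univ i, hyF⟩)

lemma attach_uniform {r k : ℕ} (hr : 1 ≤ r) {H T : FinHypergraph α} {u : α}
    (hWF : H.WellFormed) (hU : H.Uniform r)
    (hT : IsPendantEdgesAttach r k H u T) : T.Uniform r := by
  obtain ⟨hu, F, hcard, hdisjH, hpair, hv, he⟩ := hT
  intro e hee
  rw [he] at hee
  rcases Finset.mem_union.mp hee with h | h
  · exact hU e h
  · simp only [Finset.mem_image, Finset.mem_univ, true_and] at h
    obtain ⟨i, rfl⟩ := h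
    rw [Finset.card_insert_of_notMem (fun huF => Finset.disjoint_left.mp (hdisjH i) huF hu)]
    rw [hcard i]
    omega

lemma matchPoly_pendant {r : ℕ} (hr : 3 ≤ r) :
    ∀ (k : ℕ) (H T : FinHypergraph α) (u : α), H.WellFormed → H.Uniform r →
      IsPendantEdgesAttach r k H u T → ∀ x : ℝ,
      T.matchPoly r x = x ^ (k*(r-1)) * H.matchPoly r x
        - (k : ℝ) * x ^ ((k-1)*(r-1)) * (H.removeVerts {u}).matchPoly r x := by
  have hr1 : 1 ≤ r := by omega
  intro k
  induction k with
  | zero =>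
    intro H T u hWF hU hT x
    obtain ⟨hu, F, hcard, hdisjH, hpair, hv, he⟩ := hT
    have hveq : T.verts = H.verts := by
      rw [hv]
      simp
    have heeq : T.edges = H.edges := by
      rw [he]
      have : (Finset.univ : Finset (Fin 0)) = ∅ := by simp
      rw [this]
      simp
    rw [matchPoly_congr (H' := H) hveq heeq]
    simp
  | succ k IH =>
    intro H T u hWF hU hT x
    obtain ⟨hu, F, hcard, hdisjH, hpair, hv, he⟩ := hT
    have huF : ∀ i, u ∉ F i := fun i huF => Finset.disjoint_left.mp (hdisjH i) huF hu
    set f0 : Finset α := insert u (F 0) with hf0def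
    have hF0ne : (F 0).Nonempty := Finset.card_pos.mp (by rw [hcard 0]; omega)
    obtain ⟨y0, hy0⟩ := hF0ne
    set H' : FinHypergraph α := FinHypergraph.mk
      (H.verts ∪ Finset.univ.biUnion (fun i : Fin k => F i.succ))
      (H.edges ∪ Finset.univ.image (fun i : Fin k => insert u (F i.succ))) with hH'def
    have hattach' : IsPendantEdgesAttach r k H u H' := by
      refine ⟨hu, fun i => F i.succ, fun i => hcard i.succ, fun i => hdisjH i.succ,
        fun i j hij => hpair i.succ j.succ (fun hsucc => hij (Fin.succ_injective k hsucc)),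
        rfl, rfl⟩
    have hTwf : T.WellFormed := attach_wf hWF ⟨hu, F, hcard, hdisjH, hpair, hv, he⟩
    have hTu : T.Uniform r := attach_uniform hr1 hWF hU ⟨hu, F, hcard, hdisjH, hpair, hv, he⟩
    have hf0T : f0 ∈ T.edges := by
      rw [he]
      exact Finset.mem_union_right _ (Finset.mem_image.mpr ⟨0, Finset.mem_univ 0, rfl⟩)
    have hf0nH : f0 ∉ H.edges := by
      intro hmem
      have := hWF f0 hmem (Finset.mem_insert_of_mem hy0)
      exact Finset.disjoint_left.mp (hdisjH 0) hy0 this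
    have hf0nS : ∀ i : Fin k, f0 ≠ insert u (F i.succ) := by
      intro i heq
      have hy0f0 : y0 ∈ f0 := Finset.mem_insert_of_mem hy0
      rw [heq] at hy0f0
      rcases Finset.mem_insert.mp hy0f0 with rfl | hyF
      · exact huF 0 hy0
      · exact Finset.disjoint_left.mp
          (hpair 0 i.succ (fun h => by simpa using congrArg Fin.val h.symm)) hy0 hyF
    rw [matchPoly_edge_rec hr1 hTwf hTu hf0T x]
    -- Part A : edge f0 deleted
    have hvsplit : T.verts = H'.verts ∪ F 0 := by
      rw [hv, hH'def]
      ext y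
      simp only [Finset.mem_union, Finset.mem_biUnion, Finset.mem_univ, true_and]
      rw [Fin.exists_fin_succ]
      tauto
    have hesplit : T.edges.erase f0 = H'.edges := by
      rw [he, hH'def]
      ext e
      simp only [Finset.mem_erase, Finset.mem_union, Finset.mem_image, Finset.mem_univ,
        true_and]
      constructor
      · rintro ⟨hne, h | ⟨i, rfl⟩⟩
        · exact Or.inl h
        · rcases Fin.eq_zero_or_eq_succ i with rfl | ⟨j, rfl⟩
          · exact absurd hf0def.symm hne
          · exact Or.inr ⟨j, rfl⟩
      · rintro (h | ⟨i, rfl⟩)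
        · exact ⟨fun heq => hf0nH (heq ▸ h), Or.inl h⟩
        · exact ⟨(hf0nS i).symm, Or.inr ⟨i.succ, rfl⟩⟩
    have hdisjA : Disjoint H'.verts (F 0) := by
      rw [hH'def]
      simp only
      rw [Finset.disjoint_union_left]
      constructor
      · exact (hdisjH 0).symm
      · rw [Finset.disjoint_left]
        intro y hy hy0'
        obtain ⟨i, _, hyi⟩ := Finset.mem_biUnion.mp hy
        exact Finset.disjoint_left.mp
          (hpair i.succ 0 (fun h => by simpa using congrArg Fin.val h)) hyi hy0'
    have hH'wf : H'.WellFormed := attach_wf hWF hattach'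
    have hH'u : H'.Uniform r := attach_uniform hr1 hWF hU hattach'
    have hpartA : (FinHypergraph.mk T.verts (T.edges.erase f0)).matchPoly r x
        = H'.matchPoly r x * x ^ (r-1) := by
      have hEq : FinHypergraph.mk T.verts (T.edges.erase f0)
          = FinHypergraph.mk (H'.verts ∪ (FinHypergraph.mk (F 0) (∅ : Finset (Finset α))).verts)
              (H'.edges ∪ (FinHypergraph.mk (F 0) (∅ : Finset (Finset α))).edges) := by
        simp only [FinHypergraph.mk.injEq, Finset.union_empty]
        exact ⟨hvsplit, hesplit⟩
      rw [hEq, matchPoly_union hr1 hH'wf hH'u (by intro e' he'; simp at he')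
        (by intro e' he'; simp at he') hdisjA x, matchPoly_edgeless, hcard 0]
    -- Part B : vertices of f0 removed
    have hvrem : (T.removeVerts f0).verts
        = (H.removeVerts {u}).verts ∪ Finset.univ.biUnion (fun i : Fin k => F i.succ) := by
      simp only [removeVerts, hv, hf0def]
      ext y
      simp only [Finset.mem_sdiff, Finset.mem_union, Finset.mem_biUnion, Finset.mem_univ,
        true_and, Finset.mem_insert, Finset.mem_singleton]
      constructor
      · rintro ⟨hmem, hnot⟩
        push_neg at hnot
        rcases hmem with h | ⟨i, hyi⟩
        · exact Or.inl ⟨h, hnot.1⟩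
        · rcases Fin.eq_zero_or_eq_succ i with rfl | ⟨j, rfl⟩
          · exact absurd hyi hnot.2
          · exact Or.inr ⟨j, hyi⟩
      · rintro (⟨hyH, hyu⟩ | ⟨i, hyi⟩)
        · refine ⟨Or.inl hyH, ?_⟩
          push_neg
          exact ⟨hyu, fun hyF0 => Finset.disjoint_left.mp (hdisjH 0) hyF0 hyH⟩
        · refine ⟨Or.inr ⟨i.succ, hyi⟩, ?_⟩
          push_neg
          constructor
          · rintro rfl; exact huF i.succ hyi
          · intro hyF0
            exact Finset.disjoint_left.mp
              (hpair 0 i.succ (fun h => by simpa using congrArg Fin.val h.symm)) hyF0 hyi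
    have herem : (T.removeVerts f0).edges = (H.removeVerts {u}).edges := by
      simp only [removeVerts, he]
      rw [Finset.filter_union]
      have h1 : (Finset.univ.image (fun i : Fin (k+1) => insert u (F i))).filter
          (fun e => Disjoint e f0) = ∅ := by
        rw [Finset.eq_empty_iff_forall_notMem]
        intro e hee
        simp only [Finset.mem_filter, Finset.mem_image, Finset.mem_univ, true_and] at hee
        obtain ⟨⟨i, rfl⟩, hdis⟩ := hee
        exact Finset.disjoint_left.mp hdis (Finset.mem_insert_self u (F i))
          (Finset.mem_insert_self u (F 0))
      rw [h1, Finset.union_empty]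
      apply Finset.filter_congr
      intro e hee
      rw [hf0def]
      simp only [Finset.disjoint_insert_right, Finset.disjoint_singleton_right]
      have : Disjoint e (F 0) := ((hdisjH 0).mono_right (hWF e hee)).symm
      simp [this]
    have hdisjB : Disjoint (H.removeVerts {u}).verts
        (Finset.univ.biUnion (fun i : Fin k => F i.succ)) := by
      rw [Finset.disjoint_right]
      intro y hy hy'
      obtain ⟨i, _, hyi⟩ := Finset.mem_biUnion.mp hy
      simp only [removeVerts, Finset.mem_sdiff] at hy'
      exact Finset.disjoint_left.mp (hdisjH i.succ) hyi hy'.1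
    have hcardB : (Finset.univ.biUnion (fun i : Fin k => F i.succ)).card = k * (r-1) := by
      rw [Finset.card_biUnion (fun i _ j _ hij =>
        hpair i.succ j.succ (fun h => hij (Fin.succ_injective k h)))]
      rw [Finset.sum_congr rfl (fun i _ => hcard i.succ)]
      simp [mul_comm]
    have hpartB : (T.removeVerts f0).matchPoly r x
        = (H.removeVerts {u}).matchPoly r x * x ^ (k * (r-1)) := by
      have hEq : T.removeVerts f0
          = FinHypergraph.mk ((H.removeVerts {u}).verts ∪
              (FinHypergraph.mk (Finset.univ.biUnion (fun i : Fin k => F i.succ))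
                (∅ : Finset (Finset α))).verts)
              ((H.removeVerts {u}).edges ∪
              (FinHypergraph.mk (Finset.univ.biUnion (fun i : Fin k => F i.succ))
                (∅ : Finset (Finset α))).edges) := by
        cases' hrv : T.removeVerts f0 with V E
        simp only [FinHypergraph.mk.injEq, Finset.union_empty]
        constructor
        · rw [← hvrem, hrv]
        · rw [← herem, hrv]
      rw [hEq, matchPoly_union hr1 (removeVerts_wf hWF _) (removeVerts_uniform hU _)
        (by intro e' he'; simp at he') (by intro e' he'; simp at he') hdisjB x,
        matchPoly_edgeless, hcardB]
    rw [hpartA, hpartB, IH H H' u hWF hU hattach' x]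
    -- final algebra
    rcases Nat.eq_zero_or_pos k with rfl | hkpos
    · simp only [zero_add, Nat.cast_zero, Nat.cast_one, zero_mul, one_mul,
        Nat.zero_mul, pow_zero, Nat.sub_self, mul_one]
      ring
    · have e1 : (k+1) * (r-1) = k * (r-1) + (r-1) := by ring
      have e2 : k * (r-1) = (k-1) * (r-1) + (r-1) := by
        obtain ⟨k', rfl⟩ : ∃ k', k = k' + 1 := ⟨k - 1, by omega⟩
        simp only [Nat.add_sub_cancel]
        ring
      have e3 : (k + 1 - 1) * (r-1) = k * (r-1) := by simp
      rw [e3, e1, e2, pow_add, pow_add]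
      push_cast
      ring
lemma mul_le_mul_right_iff' {q : ℕ} (hq : 0 < q) (a b : ℕ) : a * q ≤ b * q ↔ a ≤ b :=
  ⟨fun h => Nat.le_of_mul_le_mul_right h hq, fun h => Nat.mul_le_mul_right _ h⟩

lemma matchPoly_path_removeJoint (hr : 3 ≤ r) {d j : ℕ} {w : ℕ → α}
    (hw : Set.InjOn w (Set.Iic (d * (r-1)))) (hj1 : 1 ≤ j) (hjd : j + 1 ≤ d) (x : ℝ) :
    ((pathHypergraph r d w).removeVerts {w (j*(r-1))}).matchPoly r x
      = pathPoly r (j-1) x * pathPoly r (d-(j+1)) x * x ^ (2*(r-2)) := by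
  have hq0 : 0 < r - 1 := by omega
  have hq2 : 2 ≤ r - 1 := by omega
  have h1 : (j-1)*(r-1) + (r-1) = j*(r-1) := by
    have : j - 1 + 1 = j := by omega
    calc (j-1)*(r-1) + (r-1) = ((j-1)+1)*(r-1) := by ring
      _ = j*(r-1) := by rw [this]
  have h2 : (j+1)*(r-1) = j*(r-1) + (r-1) := by ring
  have h3 : (j+1)*(r-1) ≤ d*(r-1) := Nat.mul_le_mul_right _ hjd
  set Mid : Finset ℕ := Finset.Ioo ((j-1)*(r-1)) (j*(r-1)) ∪
    Finset.Ioo (j*(r-1)) ((j+1)*(r-1)) with hMiddef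
  have himg : ({w (j*(r-1))} : Finset α) = ({j*(r-1)} : Finset ℕ).image w := by
    rw [Finset.image_singleton]
  rw [himg]
  rw [matchPoly_path_removeVerts hr hw {j*(r-1)} Mid (j-1) (j+1) (by omega) hjd
    (fun a ha => by simp only [Finset.mem_singleton] at ha; omega)
    ?hfilter ?hverts ?hMid x]
  · congr 2
    rw [hMiddef, Finset.card_union_of_disjoint (by
      rw [Finset.disjoint_left]
      intro a ha ha'
      simp only [Finset.mem_Ioo] at ha ha'
      omega)]
    rw [Nat.card_Ioo, Nat.card_Ioo]
    omega
  case hfilter =>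
    ext i
    simp only [Finset.mem_filter, Finset.mem_range, Finset.mem_union, Finset.mem_Ico,
      Finset.disjoint_singleton_right, Finset.mem_Icc]
    have A1 := mul_le_mul_right_iff' hq0 i j
    have A2 := mul_le_mul_right_iff' hq0 j (i+1)
    have h4 : (i+1)*(r-1) = i*(r-1) + (r-1) := by ring
    omega
  case hverts =>
    ext a
    simp only [Finset.mem_sdiff, Finset.mem_Icc, Finset.mem_union, Finset.mem_Ioo,
      Finset.mem_singleton, hMiddef]
    omega
  case hMid =>
    intro a ha
    simp only [hMiddef, Finset.mem_union, Finset.mem_Ioo] at ha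
    omega
lemma matchPoly_path_removeCore (hr : 3 ≤ r) {d j c : ℕ} {w : ℕ → α}
    (hw : Set.InjOn w (Set.Iic (d * (r-1)))) (hjd : j + 1 ≤ d)
    (hc1 : j*(r-1) < c) (hc2 : c < (j+1)*(r-1)) (x : ℝ) :
    ((pathHypergraph r d w).removeVerts {w c}).matchPoly r x
      = pathPoly r j x * pathPoly r (d-(j+1)) x * x ^ (r-3) := by
  have hq0 : 0 < r - 1 := by omega
  have hq2 : 2 ≤ r - 1 := by omega
  have h2 : (j+1)*(r-1) = j*(r-1) + (r-1) := by ring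
  have h3 : (j+1)*(r-1) ≤ d*(r-1) := Nat.mul_le_mul_right _ hjd
  set Mid : Finset ℕ := Finset.Ioo (j*(r-1)) ((j+1)*(r-1)) \ {c} with hMiddef
  have himg : ({w c} : Finset α) = ({c} : Finset ℕ).image w := by
    rw [Finset.image_singleton]
  rw [himg]
  rw [matchPoly_path_removeVerts hr hw {c} Mid j (j+1) (by omega) hjd
    (fun a ha => by simp only [Finset.mem_singleton] at ha; omega)
    ?hfilter ?hverts ?hMid x]
  · congr 2
    rw [hMiddef, Finset.card_sdiff_of_subset (by
      intro a ha
      simp only [Finset.mem_singleton] at ha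
      simp only [Finset.mem_Ioo]
      omega)]
    rw [Nat.card_Ioo]
    simp only [Finset.card_singleton]
    omega
  case hfilter =>
    ext i
    simp only [Finset.mem_filter, Finset.mem_range, Finset.mem_union, Finset.mem_Ico,
      Finset.disjoint_singleton_right, Finset.mem_Icc]
    have A1 := mul_le_mul_right_iff' hq0 (i+1) j
    have A2 := mul_le_mul_right_iff' hq0 (j+1) i
    have A5 := mul_le_mul_right_iff' hq0 i j
    have A6 := mul_le_mul_right_iff' hq0 (j+1) (i+1)
    have h4 : (i+1)*(r-1) = i*(r-1) + (r-1) := by ring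
    omega
  case hverts =>
    ext a
    simp only [Finset.mem_sdiff, Finset.mem_Icc, Finset.mem_union, Finset.mem_Ioo,
      Finset.mem_singleton, hMiddef]
    omega
  case hMid =>
    intro a ha
    simp only [hMiddef, Finset.mem_sdiff, Finset.mem_Ioo] at ha
    omega

lemma matchPoly_path_removeJoint2 (hr : 3 ≤ r) {d j : ℕ} {w : ℕ → α}
    (hw : Set.InjOn w (Set.Iic (d * (r-1)))) (hj1 : 1 ≤ j) (hjd : j + 2 ≤ d) (x : ℝ) :
    ((pathHypergraph r d w).removeVerts {w (j*(r-1)), w ((j+1)*(r-1))}).matchPoly r x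
      = pathPoly r (j-1) x * pathPoly r (d-(j+2)) x * x ^ (3*(r-2)) := by
  have hq0 : 0 < r - 1 := by omega
  have hq2 : 2 ≤ r - 1 := by omega
  have h1 : (j-1)*(r-1) + (r-1) = j*(r-1) := by
    have : j - 1 + 1 = j := by omega
    calc (j-1)*(r-1) + (r-1) = ((j-1)+1)*(r-1) := by ring
      _ = j*(r-1) := by rw [this]
  have h2 : (j+1)*(r-1) = j*(r-1) + (r-1) := by ring
  have h2' : (j+2)*(r-1) = j*(r-1) + (r-1) + (r-1) := by ring
  have h3 : (j+2)*(r-1) ≤ d*(r-1) := Nat.mul_le_mul_right _ hjd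
  set Mid : Finset ℕ := (Finset.Ioo ((j-1)*(r-1)) (j*(r-1)) ∪
    Finset.Ioo (j*(r-1)) ((j+1)*(r-1))) ∪
    Finset.Ioo ((j+1)*(r-1)) ((j+2)*(r-1)) with hMiddef
  have himg : ({w (j*(r-1)), w ((j+1)*(r-1))} : Finset α)
      = ({j*(r-1), (j+1)*(r-1)} : Finset ℕ).image w := by
    rw [Finset.image_insert, Finset.image_singleton]
  rw [himg]
  rw [matchPoly_path_removeVerts hr hw {j*(r-1), (j+1)*(r-1)} Mid (j-1) (j+2)
    (by omega) hjd
    (fun a ha => by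
      simp only [Finset.mem_insert, Finset.mem_singleton] at ha
      rcases ha with rfl | rfl <;> omega)
    ?hfilter ?hverts ?hMid x]
  · congr 2
    rw [hMiddef]
    rw [Finset.card_union_of_disjoint (by
      rw [Finset.disjoint_left]
      intro a ha ha'
      simp only [Finset.mem_union, Finset.mem_Ioo] at ha ha'
      omega)]
    rw [Finset.card_union_of_disjoint (by
      rw [Finset.disjoint_left]
      intro a ha ha'
      simp only [Finset.mem_Ioo] at ha ha'
      omega)]
    rw [Nat.card_Ioo, Nat.card_Ioo, Nat.card_Ioo]
    omega
  case hfilter =>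
    ext i
    simp only [Finset.mem_filter, Finset.mem_range, Finset.mem_union, Finset.mem_Ico,
      Finset.disjoint_insert_right, Finset.disjoint_singleton_right, Finset.mem_Icc]
    have A1 := mul_le_mul_right_iff' hq0 i j
    have A2 := mul_le_mul_right_iff' hq0 j (i+1)
    have A3 := mul_le_mul_right_iff' hq0 i (j+1)
    have A4 := mul_le_mul_right_iff' hq0 (j+1) (i+1)
    have h4 : (i+1)*(r-1) = i*(r-1) + (r-1) := by ring
    omega
  case hverts =>
    ext a
    simp only [Finset.mem_sdiff, Finset.mem_Icc, Finset.mem_union, Finset.mem_Ioo,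
      Finset.mem_insert, Finset.mem_singleton, hMiddef]
    omega
  case hMid =>
    intro a ha
    simp only [hMiddef, Finset.mem_union, Finset.mem_Ioo] at ha
    omega
end FinHypergraph

open FinHypergraph

/-- For `r ≥ 3`, `d ≥ 3`, `m ≥ d + 2`, `a = m − d − 1` and
`b = ⌈d/2⌉`, let `T''` be obtained from the loose path `P_d^r` by attaching `a` pendant
edges at the joint vertex `v_b` and one pendant edge at the joint vertex `v_{b+1}`, and
let `T_{(m,d,r)}(b)` be obtained from `P_d^r` by attaching `m − d` pendant edges at a
fixed core vertex of the edge `e_b`. Then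
`φ(T'', x) − φ(T_{(m,d,r)}(b), x)
  = x^((a+1)(r−1)−2)·( φ(P_{b−1}^r,x)·φ(P_{d−b}^r,x)
      − x^(r−1)·φ(P_{b−1}^r,x)·φ(P_{d−b−1}^r,x) )
  + a·x^((a+1)(r−1)−2)·( φ(P_{b−1}^r,x)·φ(P_{d−b}^r,x)
      − φ(P_{b−2}^r,x)·φ(P_{d−b+1}^r,x) )`. -/
theorem matchPoly_doublestar_sub_core_star {α : Type*} (r d m : ℕ)
    (hr : 3 ≤ r) (hd : 3 ≤ d) (hm : d + 2 ≤ m)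
    (w1 : ℕ → α) (hw1 : Set.InjOn w1 (Set.Iic (d * (r - 1))))
    (T1 T'' : FinHypergraph α)
    (hT1 : IsPendantEdgesAttach r (m - d - 1) (pathHypergraph r d w1)
      (w1 (((d + 1) / 2 - 1) * (r - 1))) T1)
    (hT'' : IsPendantEdgesAttach r 1 T1 (w1 (((d + 1) / 2) * (r - 1))) T'')
    (w2 : ℕ → α) (hw2 : Set.InjOn w2 (Set.Iic (d * (r - 1))))
    (c : ℕ) (hc1 : ((d + 1) / 2 - 1) * (r - 1) < c) (hc2 : c < ((d + 1) / 2) * (r - 1))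
    (Tm : FinHypergraph α)
    (hTm : IsPendantEdgesAttach r (m - d) (pathHypergraph r d w2) (w2 c) Tm)
    (R1 R2 R3 R4 R5 : FinHypergraph α)
    (hR1 : IsLoosePath r ((d + 1) / 2 - 1) R1)
    (hR2 : IsLoosePath r (d - (d + 1) / 2) R2)
    (hR3 : IsLoosePath r (d - (d + 1) / 2 - 1) R3)
    (hR4 : IsLoosePath r ((d + 1) / 2 - 2) R4)
    (hR5 : IsLoosePath r (d - (d + 1) / 2 + 1) R5) :
    ∀ x : ℝ, T''.matchPoly r x - Tm.matchPoly r x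
      = x ^ ((m - d) * (r - 1) - 2) *
            (R1.matchPoly r x * R2.matchPoly r x
              - x ^ (r - 1) * R1.matchPoly r x * R3.matchPoly r x)
        + ((m - d - 1 : ℕ) : ℝ) * x ^ ((m - d) * (r - 1) - 2) *
            (R1.matchPoly r x * R2.matchPoly r x
              - R4.matchPoly r x * R5.matchPoly r x) := by
  intro x
  have hr1 : 1 ≤ r := by omega
  have hq2 : 2 ≤ r - 1 := by omega
  set b := (d + 1) / 2 with hbdef
  set a := m - d - 1 with hadef
  have hb2 : 2 ≤ b := by omega
  have hbd : b + 1 ≤ d := by omega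
  have ha1 : 1 ≤ a := by omega
  have hmd : m - d = a + 1 := by omega
  -- path facts
  have hPd1wf := pathHypergraph_wf r d w1
  have hPd1u : (pathHypergraph r d w1).Uniform r := pathHypergraph_uniform (by omega) hw1
  have hPd2wf := pathHypergraph_wf r d w2
  have hPd2u : (pathHypergraph r d w2).Uniform r := pathHypergraph_uniform (by omega) hw2
  -- T1 facts
  have hT1wf : T1.WellFormed := attach_wf hPd1wf hT1
  have hT1u : T1.Uniform r := attach_uniform hr1 hPd1wf hPd1u hT1
  -- the two special vertices
  set vb : α := w1 ((b - 1) * (r - 1)) with hvbdef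
  set v : α := w1 (b * (r - 1)) with hvdef
  have hble : b * (r-1) ≤ d * (r-1) := Nat.mul_le_mul_right _ (by omega)
  have hb1le : (b-1) * (r-1) ≤ d * (r-1) := Nat.mul_le_mul_right _ (by omega)
  have hb1q : (b-1) * (r-1) + (r-1) = b * (r-1) := by
    have h : b - 1 + 1 = b := by omega
    calc (b-1)*(r-1) + (r-1) = ((b-1)+1)*(r-1) := by ring
      _ = b*(r-1) := by rw [h]
  have hvne : vb ≠ v := by
    intro h
    have := hw1 (show (b-1)*(r-1) ∈ Set.Iic (d*(r-1)) from hb1le)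
      (show b*(r-1) ∈ Set.Iic (d*(r-1)) from hble) h
    omega
  have hvPd : v ∈ (pathHypergraph r d w1).verts := by
    simp only [pathHypergraph]
    exact Finset.mem_image_of_mem w1 (by simp only [Finset.mem_Icc]; omega)
  -- φ(T'')
  have hTpp : T''.matchPoly r x = x ^ (r-1) * T1.matchPoly r x
      - (T1.removeVerts {v}).matchPoly r x := by
    have := matchPoly_pendant hr 1 T1 T'' v hT1wf hT1u hT'' x
    rw [this]
    simp
  -- φ(T1)
  have hT1poly : T1.matchPoly r x = x ^ (a*(r-1)) * pathPoly r d x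
      - (a : ℝ) * x ^ ((a-1)*(r-1)) *
        (pathPoly r (b-2) x * pathPoly r (d-b) x * x ^ (2*(r-2))) := by
    have h := matchPoly_pendant hr a (pathHypergraph r d w1) T1 vb hPd1wf hPd1u hT1 x
    rw [h, matchPoly_pathHypergraph hr d w1 hw1 x]
    rw [hvbdef, matchPoly_path_removeJoint hr hw1 (by omega) (by omega) x]
    rw [show b - 1 - 1 = b - 2 from by omega, show d - (b - 1 + 1) = d - b from by omega]
  -- structure of T1 - v
  obtain ⟨hu, F, hcard, hdisjH, hpair, hv, he⟩ := hT1
  have hvnF : ∀ i, v ∉ F i := fun i hvF => Finset.disjoint_left.mp (hdisjH i) hvF hvPd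
  have hattach2 : IsPendantEdgesAttach r a
      ((pathHypergraph r d w1).removeVerts {v}) vb (T1.removeVerts {v}) := by
    refine ⟨?_, F, hcard, ?_, hpair, ?_, ?_⟩
    · simp only [removeVerts, Finset.mem_sdiff, Finset.mem_singleton]
      exact ⟨hu, hvne⟩
    · intro i
      exact (hdisjH i).mono_right Finset.sdiff_subset
    · simp only [removeVerts, hv]
      ext y
      simp only [Finset.mem_sdiff, Finset.mem_union, Finset.mem_biUnion, Finset.mem_univ,
        true_and, Finset.mem_singleton]
      constructor
      · rintro ⟨h | h, hne⟩
        · exact Or.inl ⟨h, hne⟩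
        · exact Or.inr h
      · rintro (⟨h, hne⟩ | ⟨i, hyi⟩)
        · exact ⟨Or.inl h, hne⟩
        · refine ⟨Or.inr ⟨i, hyi⟩, fun hyv => ?_⟩
          subst hyv
          exact hvnF i hyi
    · simp only [removeVerts, he]
      rw [Finset.filter_union]
      congr 1
      apply Finset.filter_true_of_mem
      intro e hee
      simp only [Finset.mem_image, Finset.mem_univ, true_and] at hee
      obtain ⟨i, rfl⟩ := hee
      rw [Finset.disjoint_singleton_right]
      intro hmem
      rcases Finset.mem_insert.mp hmem with h | h
      · exact hvne h.symm
      · exact hvnF i h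
  -- φ(T1 - v)
  have hT1v : (T1.removeVerts {v}).matchPoly r x
      = x ^ (a*(r-1)) * (pathPoly r (b-1) x * pathPoly r (d-b-1) x * x ^ (2*(r-2)))
        - (a : ℝ) * x ^ ((a-1)*(r-1)) *
          (pathPoly r (b-2) x * pathPoly r (d-b-1) x * x ^ (3*(r-2))) := by
    have h := matchPoly_pendant hr a ((pathHypergraph r d w1).removeVerts {v})
      (T1.removeVerts {v}) vb (removeVerts_wf hPd1wf _) (removeVerts_uniform hPd1u _)
      hattach2 x
    rw [h]
    have h1 : ((pathHypergraph r d w1).removeVerts {v}).matchPoly r x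
        = pathPoly r (b-1) x * pathPoly r (d-b-1) x * x ^ (2*(r-2)) := by
      rw [hvdef, matchPoly_path_removeJoint hr hw1 (by omega) (by omega) x]
      rw [show d - (b+1) = d - b - 1 from by omega]
    have h2 : (((pathHypergraph r d w1).removeVerts {v}).removeVerts {vb}).matchPoly r x
        = pathPoly r (b-2) x * pathPoly r (d-b-1) x * x ^ (3*(r-2)) := by
      rw [removeVerts_removeVerts]
      have hpair' : ({v} ∪ {vb} : Finset α) = {vb, v} := by
        ext z
        simp only [Finset.mem_union, Finset.mem_singleton, Finset.mem_insert]
        tauto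
      rw [hpair', hvbdef, hvdef]
      have hbb : b * (r-1) = (b-1+1) * (r-1) := by
        congr 1
        omega
      rw [hbb, matchPoly_path_removeJoint2 hr hw1 (by omega) (by omega) x]
      rw [show b - 1 - 1 = b - 2 from by omega, show d - (b-1+2) = d - b - 1 from by omega]
    rw [h1, h2]
  -- φ(Tm)
  have hTmpoly : Tm.matchPoly r x = x ^ ((a+1)*(r-1)) * pathPoly r d x
      - ((a : ℝ) + 1) * x ^ (a*(r-1)) *
        (pathPoly r (b-1) x * pathPoly r (d-b) x * x ^ (r-3)) := by
    have h := matchPoly_pendant hr (m-d) (pathHypergraph r d w2) Tm (w2 c)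
      hPd2wf hPd2u hTm x
    rw [h, matchPoly_pathHypergraph hr d w2 hw2 x]
    have hcore : ((pathHypergraph r d w2).removeVerts {w2 c}).matchPoly r x
        = pathPoly r (b-1) x * pathPoly r (d-b) x * x ^ (r-3) := by
      have hc2' : c < (b-1+1) * (r-1) := by
        rwa [show b - 1 + 1 = b from by omega]
      rw [matchPoly_path_removeCore hr hw2 (by omega) hc1 hc2' x]
      rw [show d - (b-1+1) = d - b from by omega]
    rw [hcore, hmd]
    rw [show a + 1 - 1 = a from rfl]
    push_cast
    ring
  -- the loose paths
  have hR1p := matchPoly_isLoosePath hr hR1 x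
  have hR2p := matchPoly_isLoosePath hr hR2 x
  have hR3p := matchPoly_isLoosePath hr hR3 x
  have hR4p := matchPoly_isLoosePath hr hR4 x
  have hR5p := matchPoly_isLoosePath hr hR5 x
  rw [hTpp, hT1poly, hT1v, hTmpoly, hR1p, hR2p, hR3p, hR4p, hR5p]
  -- recurrence for P_{d-b+1}
  have hrec : pathPoly r (d - b + 1) x
      = x ^ (r-1) * pathPoly r (d-b) x - x ^ (r-2) * pathPoly r (d-b-1) x := by
    have h1 : d - b + 1 = (d - b - 1) + 2 := by omega
    have h2 : d - b - 1 + 1 = d - b := by omega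
    rw [h1]
    show x ^ (r-1) * pathPoly r (d-b-1+1) x - x ^ (r-2) * pathPoly r (d-b-1) x = _
    rw [h2]
  rw [hrec]
  -- final algebra
  obtain ⟨t, rfl⟩ : ∃ t, r = t + 3 := ⟨r - 3, by omega⟩
  obtain ⟨a', ha'⟩ : ∃ a', a = a' + 1 := ⟨a - 1, by omega⟩
  rw [hmd, ha']
  have g1 : t + 3 - 1 = t + 2 := by omega
  have g2 : t + 3 - 2 = t + 1 := by omega
  have g3 : t + 3 - 3 = t := by omega
  have g4 : a' + 1 - 1 = a' := by omega
  rw [g1, g2, g3, g4]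
  have g5 : (a' + 1 + 1) * (t + 2) - 2 = a' * t + 2 * a' + 2 * t + 2 := by
    have : (a' + 1 + 1) * (t + 2) = a' * t + 2 * a' + 2 * t + 4 := by ring
    omega
  rw [g5]
  push_cast
  ring
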